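/- Let n be even and let γ : 𝕋 → ℂ be the step function which on each arc of points closest to the n-th root of unity ω^l takes the value ω^l. Then for every integer k with |k| < n, γ^k has the Fourier expansion γ^k = Σ_{j ∈ ℤ} sinc(π(k+jn)/n) z^{k+jn} in L²(𝕋). Consequently, convolving with the Fejér kernel F_{n/2} gives F_{n/2} * γ^k = (1 - 2|k|/n) sinc(πk/n) z^k for all |k| ≤ n/2. -/

import Mathlib

open MeasureTheory

/-- `sinc x = sin x / x`, `sinc 0 = 1`. -/
noncomputable def sinc (x : ℝ) : ℝ := if x = 0 then 1 else Real.sin x / x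

/-- The step function `γ : 𝕋 → ℂ` taking on each arc the value of the nearest `n`-th root
of unity `ω^l = e^{2πil/n}` (𝕋 = ℝ/ℤ, representative in `[0,1)`, ties by `round`). -/
noncomputable def stepRoot (n : ℕ) (x : AddCircle (1 : ℝ)) : ℂ :=
  fourier 1 ((((round ((n : ℝ) * ((AddCircle.equivIco 1 0 x : ℝ)))) : ℝ) / n : ℝ) :
    AddCircle (1 : ℝ))

private lemma step_eq (n : ℕ) (hn : 1 ≤ n) (x : ℝ) :
    stepRoot n (x : AddCircle (1:ℝ)) =
      Complex.exp (2 * Real.pi * Complex.I * (((round ((n:ℝ) * x)) : ℝ) / (n:ℝ))) := by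
  have hn0 : (n:ℝ) ≠ 0 := Nat.cast_ne_zero.mpr (by omega)
  unfold stepRoot
  rw [fourier_coe_apply]
  have h1 : ((AddCircle.equivIco (1:ℝ) 0 ((x : AddCircle (1:ℝ))) : ℝ)) = Int.fract x := by
    simpa using AddCircle.coe_equivIco_mk_apply (p := (1:ℝ)) x
  rw [h1]
  have h2 : (n:ℝ) * Int.fract x = (n:ℝ)*x - (((n:ℤ)*⌊x⌋ : ℤ) : ℝ) := by
    rw [Int.fract]; push_cast; ring
  rw [h2, round_sub_intCast]
  rw [Complex.exp_eq_exp_iff_exists_int]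
  refine ⟨-⌊x⌋, ?_⟩
  have hn0' : (n:ℂ) ≠ 0 := by exact_mod_cast hn0
  push_cast
  field_simp
  ring

open Complex in
private lemma coeff_eq (n : ℕ) (hn : 1 ≤ n) (k m : ℤ) :
    fourierCoeff (fun x : AddCircle (1 : ℝ) => stepRoot n x ^ k) m =
      if (n : ℤ) ∣ (m - k) then (sinc (Real.pi * m / n) : ℂ) else 0 := by
  have hn0 : (n:ℝ) ≠ 0 := Nat.cast_ne_zero.mpr (by omega)
  have hnC : (n:ℂ) ≠ 0 := by exact_mod_cast hn0
  have hπ : (Real.pi : ℝ) ≠ 0 := Real.pi_ne_zero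
  have hπC : ((Real.pi:ℝ) : ℂ) ≠ 0 := by exact_mod_cast hπ
  have h2πI : (2*((Real.pi:ℝ):ℂ)*Complex.I) ≠ 0 := by
    simp [Complex.I_ne_zero, hπC]
  set θ : ℝ := Real.pi * m / n with hθdef
  set a : ℕ → ℝ := fun i => (2*(i:ℝ) - 1)/(2*n) with ha
  set F : ℝ → ℂ := fun x => (fourier (-m) (x : AddCircle (1:ℝ))) •
      (stepRoot n (x : AddCircle (1:ℝ)) ^ k) with hF
  have hstep' : ∀ x : ℝ, stepRoot n (x : AddCircle (1:ℝ)) ^ k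
      = Complex.exp ((k:ℂ) * (2 * Real.pi * Complex.I *
          (((round ((n:ℝ) * x)) : ℝ) / (n:ℝ)))) := by
    intro x; rw [step_eq n hn, Complex.exp_int_mul]
  have hstepmeas : Measurable (fun x : ℝ => stepRoot n (x : AddCircle (1:ℝ)) ^ k) := by
    simp only [hstep']
    apply Complex.measurable_exp.comp
    apply Measurable.mul measurable_const
    apply Measurable.mul measurable_const
    apply Measurable.div _ measurable_const
    have h1 : Measurable (fun x : ℝ => round ((n:ℝ)*x)) := by
      simp only [round_eq]
      exact ((measurable_const.mul measurable_id).add_const _).floor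
    exact Complex.measurable_ofReal.comp
      ((continuous_of_discreteTopology (f := (Int.cast : ℤ → ℝ))).measurable.comp h1)
  have hFmeas : Measurable F := by
    apply Measurable.fun_smul _ hstepmeas
    exact (map_continuous (fourier (T := (1:ℝ)) (-m))).measurable.comp
      (AddCircle.measurable_mk' (a := (1:ℝ)))
  have hfnorm : ∀ x : AddCircle (1:ℝ), ‖(fourier (-m)) x‖ = 1 := by
    intro x; rw [fourier_apply]; exact Circle.norm_coe _
  have hstepnorm : ∀ x : ℝ, ‖stepRoot n (x : AddCircle (1:ℝ)) ^ k‖ = 1 := by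
    intro x
    rw [hstep', Complex.norm_exp]
    have : ((k:ℂ) * (2 * (Real.pi:ℂ) * Complex.I * (((round ((n:ℝ) * x)) : ℝ) / (n:ℝ)))).re = 0 := by
      simp [Complex.mul_re, Complex.mul_im]
    rw [this, Real.exp_zero]
  have hFnorm : ∀ x : ℝ, ‖F x‖ ≤ 1 := by
    intro x
    rw [hF]
    simp only [smul_eq_mul, norm_mul]
    rw [hfnorm, hstepnorm, one_mul]
  have hFint : ∀ (u v : ℝ), IntervalIntegrable F volume u v := by
    intro u v
    apply IntervalIntegrable.mono_fun' (g := fun _ => (1:ℝ)) intervalIntegrable_const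
      hFmeas.aestronglyMeasurable (Filter.Eventually.of_forall hFnorm)
  haveI : Fact ((0:ℝ) < 1) := ⟨one_pos⟩
  have hcoeff : fourierCoeff (fun x : AddCircle (1:ℝ) => stepRoot n x ^ k) m
      = ∫ x in (a 0)..(a 0 + 1), F x := by
    rw [fourierCoeff_eq_intervalIntegral _ m (a 0)]
    simp [hF]
  have han : a 0 + 1 = a n := by rw [ha]; field_simp; ring
  have hsplit : ∫ x in (a 0)..(a n), F x = ∑ i ∈ Finset.range n, ∫ x in (a i)..(a (i+1)), F x :=
    (intervalIntegral.sum_integral_adjacent_intervals (fun i _ => hFint _ _)).symm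
  set r : ℂ := Complex.exp (2*Real.pi*Complex.I*((k:ℂ)-m)/n) with hr
  -- value of each piece
  have hpiece : ∀ i : ℕ, (∫ x in (a i)..(a (i+1)), F x) = r ^ i * ((sinc θ : ℝ) / n) := by
    intro i
    have hab : a i ≤ a (i+1) := by
      rw [ha]
      rw [div_le_div_iff_of_pos_right (by positivity)]
      push_cast; linarith
    -- replace the step factor by its constant value a.e.
    have hcongr : (∫ x in (a i)..(a (i+1)), F x)
        = ∫ x in (a i)..(a (i+1)),
            (fourier (-m) (x : AddCircle (1:ℝ))) * Complex.exp ((k:ℂ) * (2*Real.pi*Complex.I*(i:ℂ)/n)) := by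
      apply intervalIntegral.integral_congr_ae
      have hnull : (volume : Measure ℝ) {a (i+1)} = 0 := measure_singleton _
      filter_upwards [measure_eq_zero_iff_ae_notMem.mp hnull] with x hx hxI
      rw [Set.uIoc_of_le hab] at hxI
      have hxlt : x < a (i+1) := lt_of_le_of_ne hxI.2 (by simpa using hx)
      have hround : round ((n:ℝ) * x) = (i : ℤ) := by
        rw [round_eq, Int.floor_eq_iff]
        constructor
        · have := hxI.1
          rw [ha] at this
          rw [div_lt_iff₀ (by positivity)] at this
          push_cast at this ⊢
          linarith
        · have := hxlt
          rw [ha] at this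
          rw [lt_div_iff₀ (by positivity)] at this
          push_cast at this ⊢
          linarith
      rw [hF]
      simp only [smul_eq_mul]
      rw [hstep', hround]
      norm_num
      ring_nf
    rw [hcongr, intervalIntegral.integral_mul_const]
    -- compute the character integral
    have hJ : (∫ x in (a i)..(a (i+1)), (fourier (-m) (x : AddCircle (1:ℝ))))
        = Complex.exp (-(m:ℂ) * (2*Real.pi*Complex.I*(i:ℂ)/n)) * ((sinc θ : ℝ)/n) := by
      by_cases hm : m = 0
      · subst hm
        have hθ0 : θ = 0 := by rw [hθdef]; simp
        simp only [neg_zero, Int.cast_zero, neg_mul, zero_mul, Complex.exp_zero, one_mul,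
          hθ0, sinc, if_pos rfl, if_true]
        have h1 : ∀ x : ℝ, (fourier (0:ℤ) (x : AddCircle (1:ℝ))) = (1:ℂ) := fun x => fourier_zero
        have hlen : a (i+1) - a i = 1/(n:ℝ) := by rw [ha]; push_cast; field_simp; ring
        simp only [h1, intervalIntegral.integral_const, smul_eq_mul, mul_one, hlen]
        push_cast
        norm_num
      · have hmC : ((m:ℂ)) ≠ 0 := Int.cast_ne_zero.mpr hm
        set c : ℂ := 2*(Real.pi:ℂ)*Complex.I*(-(m:ℂ)) with hc
        have hc0 : c ≠ 0 := mul_ne_zero h2πI (neg_ne_zero.mpr hmC)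
        have hfc : ∀ x : ℝ, (fourier (-m) (x : AddCircle (1:ℝ))) = Complex.exp (c * x) := by
          intro x
          rw [fourier_coe_apply]
          congr 1
          rw [hc]
          push_cast
          field_simp
        simp only [hfc]
        rw [integral_exp_mul_complex hc0]
        have e1 : c * ((a (i+1) : ℝ) : ℂ)
            = -(m:ℂ) * (2*Real.pi*Complex.I*(i:ℂ)/n) + (-(θ:ℂ)) * Complex.I := by
          rw [ha, hc, hθdef]; push_cast; field_simp; ring
        have e2 : c * ((a i : ℝ) : ℂ)
            = -(m:ℂ) * (2*Real.pi*Complex.I*(i:ℂ)/n) + ((θ:ℂ)) * Complex.I := by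
          rw [ha, hc, hθdef]; push_cast; field_simp; ring
        rw [e1, e2, Complex.exp_add, Complex.exp_add, ← mul_sub, mul_div_assoc]
        congr 1
        have hXY : Complex.exp ((-(θ:ℂ))*Complex.I) - Complex.exp ((θ:ℂ)*Complex.I)
            = -2*Complex.sin θ*Complex.I := by
          rw [Complex.exp_mul_I, Complex.exp_mul_I, Complex.cos_neg, Complex.sin_neg]; ring
        rw [hXY]
        have hθ0 : θ ≠ 0 := by
          rw [hθdef]
          intro h
          apply hm
          have : (m:ℝ) = 0 := by
            field_simp at h
            simpa [hπ] using h
          exact_mod_cast this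
        rw [show (sinc θ : ℝ) = Real.sin θ / θ by rw [sinc, if_neg hθ0]]
        rw [← Complex.ofReal_sin]
        rw [hc, hθdef]
        push_cast
        have hmR : ((m:ℝ):ℂ) ≠ 0 := hmC
        field_simp
    rw [hJ]
    have : r ^ i = Complex.exp ((k:ℂ) * (2*Real.pi*Complex.I*(i:ℂ)/n))
        * Complex.exp (-(m:ℂ) * (2*Real.pi*Complex.I*(i:ℂ)/n)) := by
      rw [← Complex.exp_add, hr, ← Complex.exp_nat_mul]
      congr 1
      field_simp
      ring
    rw [this]
    ring
  rw [hcoeff, han, hsplit]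
  simp only [hpiece]
  rw [← Finset.sum_mul]
  by_cases hdvd : (n:ℤ) ∣ m - k
  · obtain ⟨d, hd⟩ := hdvd
    have hkm : ((k:ℂ) - m) = -((n:ℂ)*d) := by
      have : (k - m : ℤ) = -((n:ℤ)*d) := by linarith
      exact_mod_cast this
    have hr1 : r = 1 := by
      rw [hr, show 2*(Real.pi:ℂ)*Complex.I*((k:ℂ)-m)/n = ((-d : ℤ):ℂ) * (2*Real.pi*Complex.I) by
        rw [hkm]; push_cast; field_simp]
      exact Complex.exp_int_mul_two_pi_mul_I _
    rw [if_pos ⟨d, hd⟩]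
    simp only [hr1, one_pow, Finset.sum_const, Finset.card_range, nsmul_eq_mul, mul_one]
    rw [mul_div_cancel₀ _ hnC]
  · have hrne : r ≠ 1 := by
      intro h
      rw [hr, Complex.exp_eq_one_iff] at h
      obtain ⟨j, hj⟩ := h
      apply hdvd
      have hkm : ((k:ℂ) - m) = (j:ℂ)*n := by
        apply mul_left_cancel₀ h2πI
        field_simp at hj
        linear_combination (2*(Real.pi:ℂ)*Complex.I) * hj
      have : (k - m : ℤ) = j*n := by exact_mod_cast hkm
      exact ⟨-j, by linarith⟩
    rw [geom_sum_eq hrne]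
    have hrn : r^n = 1 := by
      rw [hr, ← Complex.exp_nat_mul,
        show (n:ℂ)*(2*(Real.pi:ℂ)*Complex.I*((k:ℂ)-m)/n) = ((k - m : ℤ):ℂ)*(2*Real.pi*Complex.I) by
          push_cast; field_simp]
      exact Complex.exp_int_mul_two_pi_mul_I _
    rw [hrn, if_neg hdvd]
    simp

/-- for even `n` and `|k| < n`, the Fourier expansion of `γ^k` in `L²(𝕋)` is
`γ^k = Σ_{j∈ℤ} sinc(π(k+jn)/n) z^{k+jn}`, expressed via its Fourier coefficients:
`(γ^k)^(m) = sinc(πm/n)` when `n ∣ m − k` and `0` otherwise.  Consequently, convolution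
with the Fejér kernel `F_{n/2}` (multiplication of the `m`-th coefficient by
`(1 − |m|/(n/2))⁺`) gives `F_{n/2} * γ^k = (1 − 2|k|/n) sinc(πk/n) z^k` for `|k| ≤ n/2`,
again expressed via Fourier coefficients. -/
theorem stepRoot_pow_fourierCoeff (n : ℕ) (hn : Even n) (hn1 : 1 ≤ n) :
    (∀ k : ℤ, |k| < (n : ℤ) → ∀ m : ℤ,
      fourierCoeff (fun x : AddCircle (1 : ℝ) => stepRoot n x ^ k) m =
        if (n : ℤ) ∣ (m - k) then (sinc (Real.pi * m / n) : ℂ) else 0) ∧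
    (∀ k : ℤ, |k| ≤ (n : ℤ) / 2 → ∀ m : ℤ,
      ((max 0 (1 - |(m : ℝ)| / ((n : ℝ) / 2)) : ℝ) : ℂ) *
          fourierCoeff (fun x : AddCircle (1 : ℝ) => stepRoot n x ^ k) m =
        if m = k then ((1 - 2 * |(k : ℝ)| / n) * sinc (Real.pi * k / n) : ℂ) else 0) := by
  obtain ⟨t, ht⟩ := hn
  have htn : n = 2*t := by omega
  have htpos : 1 ≤ t := by omega
  have htR : (n:ℝ)/2 = (t:ℝ) := by
    have : (n:ℝ) = 2*(t:ℝ) := by exact_mod_cast congrArg (Nat.cast (R := ℝ)) htn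
    rw [this]; ring
  have htRpos : (0:ℝ) < (t:ℝ) := by positivity
  have hn0 : (n:ℝ) ≠ 0 := Nat.cast_ne_zero.mpr (by omega)
  constructor
  · intro k _ m; exact coeff_eq n hn1 k m
  · intro k hk m
    have ht2 : (n:ℤ)/2 = (t:ℤ) := by omega
    rw [ht2] at hk
    have hkR : |(k:ℝ)| ≤ (t:ℝ) := by
      rw [← Int.cast_abs]; exact_mod_cast hk
    rw [coeff_eq n hn1 k m]
    by_cases hmk : m = k
    · subst hmk
      rw [if_pos (by simp), if_pos rfl]
      have hmax : max 0 (1 - |(m:ℝ)|/((n:ℝ)/2)) = 1 - 2*|(m:ℝ)|/n := by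
        rw [htR, max_eq_right]
        · have hnR : (n:ℝ) = 2*(t:ℝ) := by
            exact_mod_cast congrArg (Nat.cast (R := ℝ)) htn
          rw [hnR]
          field_simp
        · rw [sub_nonneg, div_le_one htRpos]; exact hkR
      rw [hmax]
      push_cast
      ring
    · rw [if_neg hmk]
      by_cases hdvd : (n:ℤ) ∣ m - k
      · have h1 : (n:ℤ) ≤ |m - k| :=
          Int.le_of_dvd (abs_pos.mpr (sub_ne_zero.mpr hmk)) ((dvd_abs _ _).mpr hdvd)
        have habs : |m - k| ≤ |m| + |k| := abs_sub m k
        have h2 : (t:ℤ) ≤ |m| := by omega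
        have h2R : (t:ℝ) ≤ |(m:ℝ)| := by
          rw [← Int.cast_abs]; exact_mod_cast h2
        have hmax0 : max 0 (1 - |(m:ℝ)|/((n:ℝ)/2)) = 0 := by
          rw [htR, max_eq_left]
          rw [sub_nonpos, le_div_iff₀ htRpos, one_mul]
          exact h2R
        rw [if_pos hdvd, hmax0]
        simp
      · rw [if_neg hdvd, mul_zero]
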